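/- arXiv:0909.2983 — 7 statements merged into one kernel-verified Lean document; each statement's English description precedes it below -/
import Mathlib

section
/- For positive integers m and n with n > 1, the sum over divisors d of n of μ(d)·2^(⌊(m+1)/d⌋ − ⌊(m−1)/d⌋) equals 1 if gcd(m,n) > 1 and gcd(m+1,n) > 1; equals 2 if exactly one of gcd(m,n), gcd(m+1,n) equals 1; and equals 3 if gcd(m,n) = gcd(m+1,n) = 1. -/
open ArithmeticFunction Finset

lemma moebius_sum_divisors (k : ℕ) :
    (∑ d ∈ k.divisors, (moebius d : ℤ)) = if k = 1 then 1 else 0 := by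
  have h : (moebius * zeta : ArithmeticFunction ℤ) k = (1 : ArithmeticFunction ℤ) k := by
    rw [moebius_mul_coe_zeta]
  rwa [coe_mul_zeta_apply, one_apply] at h

lemma filter_dvd_divisors (x n : ℕ) (hn : n ≠ 0) :
    n.divisors.filter (· ∣ x) = (Nat.gcd x n).divisors := by
  ext d
  simp only [Finset.mem_filter, Nat.mem_divisors, Nat.dvd_gcd_iff]
  constructor
  · rintro ⟨⟨h1, _⟩, h2⟩; exact ⟨⟨h2, h1⟩, Nat.gcd_ne_zero_right hn⟩
  · rintro ⟨⟨h1, h2⟩, _⟩; exact ⟨⟨h2, hn⟩, h1⟩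

lemma key_sum (x n : ℕ) (hn : n ≠ 0) :
    (∑ d ∈ n.divisors, (moebius d : ℤ) * (if d ∣ x then 1 else 0)) =
      if Nat.gcd x n = 1 then 1 else 0 := by
  simp only [mul_ite, mul_one, mul_zero]
  rw [← Finset.sum_filter, filter_dvd_divisors x n hn, moebius_sum_divisors]

lemma exp_eq (d m : ℕ) (hm : 0 < m) :
    (m + 1) / d - (m - 1) / d =
      (if d ∣ m then 1 else 0) + (if d ∣ m + 1 then 1 else 0) := by
  obtain ⟨k, rfl⟩ : ∃ k, m = k + 1 := ⟨m - 1, by omega⟩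
  simp only [Nat.add_sub_cancel]
  rw [Nat.succ_div (a := k + 1) (b := d), Nat.succ_div (a := k) (b := d)]
  omega

theorem stmt2 (m n : ℕ) (hm : 0 < m) (hn : 1 < n) :
    (∑ d ∈ n.divisors, (ArithmeticFunction.moebius d) * 2 ^ ((m + 1) / d - (m - 1) / d)) =
      (if Nat.gcd m n = 1 then (if Nat.gcd (m + 1) n = 1 then 3 else 2)
       else (if Nat.gcd (m + 1) n = 1 then 2 else 1) : ℤ) := by
  have hn0 : n ≠ 0 := by omega
  have step : ∀ d ∈ n.divisors,
      (moebius d : ℤ) * 2 ^ ((m + 1) / d - (m - 1) / d) =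
        (moebius d : ℤ) + (moebius d : ℤ) * (if d ∣ m then 1 else 0)
          + (moebius d : ℤ) * (if d ∣ m + 1 then 1 else 0)
          + (moebius d : ℤ) * (if d = 1 then 1 else 0) := by
    intro d hd
    rw [exp_eq d m hm]
    by_cases h1 : d ∣ m <;> by_cases h2 : d ∣ m + 1
    · have hd1 : d = 1 := Nat.dvd_one.mp (by simpa using Nat.dvd_sub h2 h1)
      simp only [h1, h2, hd1, if_true]
      norm_num
    · have hd1 : d ≠ 1 := fun h => h2 (by subst h; exact one_dvd _)
      simp only [h1, h2, hd1, if_true, if_false]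
      ring
    · have hd1 : d ≠ 1 := fun h => h1 (by subst h; exact one_dvd _)
      simp only [h1, h2, hd1, if_true, if_false]
      ring
    · have hd1 : d ≠ 1 := fun h => h1 (by subst h; exact one_dvd _)
      simp only [h1, h2, hd1, if_false]
      ring
  rw [Finset.sum_congr rfl step]
  simp only [Finset.sum_add_distrib]
  rw [key_sum m n hn0, key_sum (m + 1) n hn0, moebius_sum_divisors n]
  have h1 : (∑ d ∈ n.divisors, (moebius d : ℤ) * (if d = 1 then 1 else 0)) = 1 := by
    simp only [mul_ite, mul_one, mul_zero]
    rw [← Finset.sum_filter]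
    have heq : n.divisors.filter (· = 1) = {1} := by
      ext d
      simp only [Finset.mem_filter, Nat.mem_divisors, Finset.mem_singleton]
      constructor
      · rintro ⟨_, rfl⟩; rfl
      · rintro rfl; exact ⟨⟨one_dvd n, hn0⟩, rfl⟩
    rw [heq]
    simp
  rw [h1]
  have hne : ¬ n = 1 := by omega
  by_cases hg1 : Nat.gcd m n = 1 <;> by_cases hg2 : Nat.gcd (m + 1) n = 1 <;>
    simp [hg1, hg2, hne]
end

section
/- For positive integers m and n with n > 1, the sum over divisors d of n of μ(d)·C(⌊(m+1)/d⌋ − ⌊(m−1)/d⌋ + 1, 2) equals 1 if gcd(m,n) > 1 and gcd(m+1,n) > 1; equals 2 if exactly one of gcd(m,n), gcd(m+1,n) equals 1; and equals 3 if gcd(m,n) = gcd(m+1,n) = 1. -/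
open ArithmeticFunction ArithmeticFunction.Moebius ArithmeticFunction.zeta Finset in
lemma sum_moeb (k : ℕ) : ∑ d ∈ k.divisors, (μ d : ℤ) = if k = 1 then 1 else 0 := by
  have h2 : (↑μ * ζ : ArithmeticFunction ℤ) k = (1 : ArithmeticFunction ℤ) k := by
    rw [moebius_mul_coe_zeta]
  rwa [coe_mul_zeta_apply, one_apply] at h2

open ArithmeticFunction ArithmeticFunction.Moebius Finset in
lemma sum_moeb_dvd (m n : ℕ) (hn : 0 < n) :
    ∑ d ∈ n.divisors, (μ d : ℤ) * (if d ∣ m then 1 else 0) =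
      if Nat.gcd m n = 1 then 1 else 0 := by
  rw [← sum_moeb (Nat.gcd m n),
    ← Nat.divisors_filter_dvd_of_dvd hn.ne' (Nat.gcd_dvd_right m n)]
  rw [Finset.sum_filter]
  apply Finset.sum_congr rfl
  intro d hd
  have hdn : d ∣ n := (Nat.mem_divisors.mp hd).1
  by_cases h : d ∣ m
  · simp [h, Nat.dvd_gcd h hdn]
  · have : ¬ d ∣ Nat.gcd m n := fun hg => h (hg.trans (Nat.gcd_dvd_left m n))
    simp [h, this]

lemma div_sub_div_eq (m d : ℕ) (hm : 0 < m) :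
    (m + 1) / d - (m - 1) / d =
      (if d ∣ m then 1 else 0) + (if d ∣ m + 1 then 1 else 0) := by
  have hm' : m - 1 + 1 = m := Nat.succ_pred_eq_of_pos hm
  have h1 : m / d = (m - 1) / d + (if d ∣ m then 1 else 0) := by
    conv_lhs => rw [← hm']
    rw [Nat.succ_div, hm']
  have h2 : (m + 1) / d = m / d + (if d ∣ m + 1 then 1 else 0) := Nat.succ_div
  omega

lemma choose_eq (m d : ℕ) (hm : 0 < m) (hd : 0 < d) :
    (Nat.choose ((m + 1) / d - (m - 1) / d + 1) 2 : ℤ) =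
      (if d ∣ m then 1 else 0) + (if d ∣ m + 1 then 1 else 0)
        + (if d ∣ 1 then 1 else 0) := by
  rw [div_sub_div_eq m d hm]
  by_cases h1 : d ∣ m <;> by_cases h2 : d ∣ m + 1
  · have hd1 : d ∣ 1 := by simpa using Nat.dvd_sub h2 h1
    norm_num [h1, h2, hd1]
  · have hd1 : ¬ d ∣ 1 := fun h => h2 (h.trans (one_dvd _))
    norm_num [h1, h2, hd1]
  · have hd1 : ¬ d ∣ 1 := fun h => h1 (h.trans (one_dvd _))
    norm_num [h1, h2, hd1]
  · have hd1 : ¬ d ∣ 1 := fun h => h1 (h.trans (one_dvd _))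
    norm_num [h1, h2, hd1]

theorem stmt4 (m n : ℕ) (hm : 0 < m) (hn : 1 < n) :
    (∑ d ∈ n.divisors, (ArithmeticFunction.moebius d) *
        (Nat.choose ((m + 1) / d - (m - 1) / d + 1) 2 : ℤ)) =
      (if Nat.gcd m n = 1 then (if Nat.gcd (m + 1) n = 1 then 3 else 2)
       else (if Nat.gcd (m + 1) n = 1 then 2 else 1) : ℤ) := by
  have hn0 : 0 < n := by omega
  have key : ∀ d ∈ n.divisors, (ArithmeticFunction.moebius d) *
      (Nat.choose ((m + 1) / d - (m - 1) / d + 1) 2 : ℤ) =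
      (ArithmeticFunction.moebius d : ℤ) * (if d ∣ m then 1 else 0)
        + (ArithmeticFunction.moebius d : ℤ) * (if d ∣ m + 1 then 1 else 0)
        + (ArithmeticFunction.moebius d : ℤ) * (if d ∣ 1 then 1 else 0) := by
    intro d hd
    have hd0 : 0 < d := Nat.pos_of_mem_divisors hd
    rw [choose_eq m d hm hd0]
    ring
  rw [Finset.sum_congr rfl key, Finset.sum_add_distrib, Finset.sum_add_distrib,
    sum_moeb_dvd m n hn0, sum_moeb_dvd (m+1) n hn0, sum_moeb_dvd 1 n hn0]
  simp only [Nat.gcd_one_left, if_pos rfl]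
  by_cases h1 : Nat.gcd m n = 1 <;> by_cases h2 : Nat.gcd (m+1) n = 1 <;>
    simp [h1, h2]
end

section
/- For positive integers l ≤ m and n, the number of nonempty subsets X of the interval [l,m] = {l, l+1, ..., m} with gcd(X ∪ {n}) = 1 equals the sum over divisors d of n of μ(d)·2^(⌊m/d⌋ − ⌊(l−1)/d⌋), where the empty-set convention is such that one interprets Φ([l,m],n) counting nonempty subsets (note for n > 1 the term subtracting the empty set vanishes since ∑_{d|n} μ(d) = 0). -/
open Finset

open ArithmeticFunction ArithmeticFunction.Moebius ArithmeticFunction.zeta in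
lemma musum (k : ℕ) : ∑ d ∈ k.divisors, (ArithmeticFunction.moebius d : ℤ) = if k = 1 then 1 else 0 := by
  have h : ((μ * ζ : ArithmeticFunction ℤ)) k = (1 : ArithmeticFunction ℤ) k := by
    rw [moebius_mul_coe_zeta]
  rw [coe_mul_zeta_apply, one_apply] at h
  simpa using h

theorem stmt5 (l m n : ℕ) (hl : 0 < l) (hlm : l ≤ m) (hn : 1 < n) :
    ((((Finset.Icc l m).powerset.filter
        (fun X => X.Nonempty ∧ Nat.gcd (X.gcd id) n = 1)).card : ℤ)) =
      ∑ d ∈ n.divisors, (ArithmeticFunction.moebius d) * 2 ^ (m / d - (l - 1) / d) := by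
  have hn0 : n ≠ 0 := by omega
  set S := Finset.Icc l m with hS
  set T := S.powerset.filter (·.Nonempty) with hT
  have hcount : ∀ d : ℕ, (S.filter (fun x => d ∣ x)).card = m / d - (l - 1) / d := by
    intro d
    have h1 : S = Ioc (l - 1) m := by
      rw [hS]; ext x; simp only [mem_Icc, mem_Ioc]; omega
    have h2 : Ioc (l-1) m = Ioc 0 m \ Ioc 0 (l-1) := by
      ext x; simp; omega
    have h3 : filter (fun x => d ∣ x) (Ioc 0 m \ Ioc 0 (l-1)) = filter (fun x => d ∣ x) (Ioc 0 m) \ filter (fun x => d ∣ x) (Ioc 0 (l-1)) := by ext x; simp only [mem_sdiff, mem_filter, mem_Ioc, ← Nat.not_le]; tauto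
    rw [h1, h2, h3, card_sdiff_of_subset]
    · rw [Nat.Ioc_filter_dvd_card_eq_div, Nat.Ioc_filter_dvd_card_eq_div]
    · exact filter_subset_filter _ (Ioc_subset_Ioc_right (by omega))
  have hsplit : S.powerset.filter (fun X => X.Nonempty ∧ Nat.gcd (X.gcd id) n = 1)
      = T.filter (fun X => Nat.gcd (X.gcd id) n = 1) := by
    rw [hT, filter_filter]
  have key : ∀ X ∈ T, (if Nat.gcd (X.gcd id) n = 1 then (1:ℤ) else 0)
      = ∑ d ∈ n.divisors, (if d ∣ X.gcd id then (ArithmeticFunction.moebius d : ℤ) else 0) := by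
    intro X _
    have heq : ∑ d ∈ n.divisors, (if d ∣ X.gcd id then (ArithmeticFunction.moebius d : ℤ) else 0)
        = ∑ d ∈ (Nat.gcd (X.gcd id) n).divisors, (ArithmeticFunction.moebius d : ℤ) := by
      rw [← sum_filter]
      congr 1
      ext d
      simp only [mem_filter, Nat.mem_divisors]
      constructor
      · rintro ⟨⟨hdn, -⟩, hdX⟩
        refine ⟨Nat.dvd_gcd hdX hdn, ?_⟩
        simp [Nat.gcd_eq_zero_iff, hn0]
      · rintro ⟨hd, -⟩
        exact ⟨⟨hd.trans (Nat.gcd_dvd_right _ _), hn0⟩, hd.trans (Nat.gcd_dvd_left _ _)⟩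
    rw [heq, musum]
  have hcard : ∀ d : ℕ, (T.filter (fun X => d ∣ X.gcd id)).card
      = 2 ^ (m / d - (l - 1) / d) - 1 := by
    intro d
    have h1 : T.filter (fun X => d ∣ X.gcd id)
        = (S.filter (fun x => d ∣ x)).powerset.filter (·.Nonempty) := by
      rw [hT, filter_filter]
      ext X
      simp only [mem_filter, mem_powerset, Finset.subset_iff, mem_filter,
        Finset.dvd_gcd_iff, id_eq]
      constructor
      · rintro ⟨hXS, hne, hdvd⟩; exact ⟨fun x hx => ⟨hXS hx, hdvd x hx⟩, hne⟩
      · rintro ⟨hXS, hne⟩; exact ⟨fun x hx => (hXS hx).1, hne, fun x hx => (hXS hx).2⟩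
    have h2 : (S.filter (fun x => d ∣ x)).powerset.filter (·.Nonempty)
        = (S.filter (fun x => d ∣ x)).powerset.erase ∅ := by
      ext X
      simp [Finset.nonempty_iff_ne_empty, and_comm]
    rw [h1, h2, card_erase_of_mem (empty_mem_powerset _), card_powerset, hcount]
  calc ((S.powerset.filter (fun X => X.Nonempty ∧ Nat.gcd (X.gcd id) n = 1)).card : ℤ)
      = ∑ X ∈ T, (if Nat.gcd (X.gcd id) n = 1 then (1:ℤ) else 0) := by
        rw [hsplit, sum_boole]
    _ = ∑ X ∈ T, ∑ d ∈ n.divisors, (if d ∣ X.gcd id then (ArithmeticFunction.moebius d : ℤ) else 0) :=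
        sum_congr rfl key
    _ = ∑ d ∈ n.divisors, ∑ X ∈ T, (if d ∣ X.gcd id then (ArithmeticFunction.moebius d : ℤ) else 0) :=
        sum_comm
    _ = ∑ d ∈ n.divisors, ((T.filter (fun X => d ∣ X.gcd id)).card : ℤ) * ArithmeticFunction.moebius d := by
        refine sum_congr rfl fun d _ => ?_
        rw [← sum_filter, sum_const, nsmul_eq_mul]
    _ = ∑ d ∈ n.divisors, ((2:ℤ) ^ (m / d - (l - 1) / d) - 1) * ArithmeticFunction.moebius d := by
        refine sum_congr rfl fun d _ => ?_
        rw [hcard d]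
        congr 1
        push_cast [Nat.one_le_two_pow]
        ring
    _ = ∑ d ∈ n.divisors, (ArithmeticFunction.moebius d : ℤ) * 2 ^ (m / d - (l - 1) / d)
          - ∑ d ∈ n.divisors, (ArithmeticFunction.moebius d : ℤ) := by
        rw [← sum_sub_distrib]
        refine sum_congr rfl fun d _ => ?_
        ring
    _ = ∑ d ∈ n.divisors, (ArithmeticFunction.moebius d : ℤ) * 2 ^ (m / d - (l - 1) / d) := by
        rw [musum, if_neg (by omega)]
        ring
end

section
/- For positive integers l ≤ m and n, the number of subsets X of [l,m] = {l, ..., m} containing l with gcd(X ∪ {n}) = 1 equals the sum over common divisors d of l and n of μ(d)·2^(⌊m/d⌋ − l/d). -/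
open Finset

lemma card_Ioc_filter_dvd (d a b : ℕ) (h : a ≤ b) :
    ((Finset.Ioc a b).filter (d ∣ ·)).card = b / d - a / d := by
  have hunion : Finset.Ioc 0 a ∪ Finset.Ioc a b = Finset.Ioc 0 b :=
    Finset.Ioc_union_Ioc_eq_Ioc (Nat.zero_le a) h
  have hdisj : Disjoint (Finset.Ioc 0 a) (Finset.Ioc a b) := by
    simp [Finset.disjoint_left]
    omega
  have := Nat.Ioc_filter_dvd_card_eq_div b d
  have h2 := Nat.Ioc_filter_dvd_card_eq_div a d
  have hcard : ((Finset.Ioc 0 a).filter (d ∣ ·)).card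
      + ((Finset.Ioc a b).filter (d ∣ ·)).card
      = ((Finset.Ioc 0 b).filter (d ∣ ·)).card := by
    rw [← hunion, Finset.filter_union,
      Finset.card_union_of_disjoint (Finset.disjoint_filter_filter hdisj)]
  simp only [Nat.Ioc_filter_dvd_card_eq_div] at hcard
  omega

lemma count_subsets (l m d : ℕ) (hl : 0 < l) (hlm : l ≤ m) (hd : d ∣ l) (hd0 : 0 < d) :
    ((((Finset.Icc l m).powerset.filter (fun X => l ∈ X)).filter
        (fun X => d ∣ X.gcd id)).card) = 2 ^ (m / d - l / d) := by
  set T : Finset ℕ := ((Finset.Icc l m).filter (d ∣ ·)).erase l with hT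
  have hlT : l ∉ T := Finset.notMem_erase _ _
  have key : (((Finset.Icc l m).powerset.filter (fun X => l ∈ X)).filter
      (fun X => d ∣ X.gcd id)) = T.powerset.image (insert l) := by
    ext X
    simp only [Finset.mem_filter, Finset.mem_powerset, Finset.mem_image]
    constructor
    · rintro ⟨⟨hXsub, hlX⟩, hdvd⟩
      refine ⟨X.erase l, ?_, ?_⟩
      · intro y hy
        rw [Finset.mem_erase] at hy
        rw [hT, Finset.mem_erase, Finset.mem_filter]
        exact ⟨hy.1, hXsub hy.2, dvd_trans hdvd (Finset.gcd_dvd hy.2)⟩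
      · exact Finset.insert_erase hlX
    · rintro ⟨Y, hY, rfl⟩
      have hYsub : ∀ y ∈ Y, y ∈ Finset.Icc l m ∧ d ∣ y := by
        intro y hy
        have := hY hy
        rw [hT, Finset.mem_erase, Finset.mem_filter] at this
        exact ⟨this.2.1, this.2.2⟩
      refine ⟨⟨?_, Finset.mem_insert_self _ _⟩, ?_⟩
      · intro x hx
        rcases Finset.mem_insert.mp hx with rfl | hx
        · exact Finset.mem_Icc.mpr ⟨le_refl _, hlm⟩
        · exact (hYsub x hx).1
      · apply Finset.dvd_gcd
        intro x hx
        rcases Finset.mem_insert.mp hx with rfl | hx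
        · exact hd
        · exact (hYsub x hx).2
  rw [key, Finset.card_image_of_injOn, Finset.card_powerset]
  · congr 1
    -- card T = m / d - l / d
    have hlmem : l ∈ (Finset.Icc l m).filter (d ∣ ·) := by
      simp [Finset.mem_Icc, hlm, hd]
    have hcardT : T.card = ((Finset.Icc l m).filter (d ∣ ·)).card - 1 :=
      Finset.card_erase_of_mem hlmem
    have hIcc : Finset.Icc l m = Finset.Ioc (l - 1) m := by
      ext x; simp [Finset.mem_Icc, Finset.mem_Ioc]; omega
    have hcount : ((Finset.Icc l m).filter (d ∣ ·)).card = m / d - (l - 1) / d := by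
      rw [hIcc]; exact card_Ioc_filter_dvd d (l - 1) m (by omega)
    obtain ⟨k, rfl⟩ := hd
    have hk : 0 < k := by
      rcases Nat.eq_zero_or_pos k with h | h
      · simp [h] at hl
      · exact h
    have h1 : (d * k) / d = k := by
      rw [Nat.mul_div_cancel_left _ hd0]
    have h2 : (d * k - 1) / d = k - 1 := by
      obtain ⟨k', rfl⟩ : ∃ k', k = k' + 1 := ⟨k - 1, by omega⟩
      rw [Nat.succ_sub_one]
      have e : d * (k' + 1) = d * k' + d := by ring
      have e2 : k' * d = d * k' := Nat.mul_comm _ _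
      have e3 : (k' + 1) * d = d * k' + d := by ring
      apply Nat.div_eq_of_lt_le <;> omega
    have h3 : k ≤ m / d := by
      rw [Nat.le_div_iff_mul_le hd0]
      have : k * d = d * k := Nat.mul_comm _ _
      omega
    rw [hcardT, hcount, h1, h2]
    omega
  · intro Y₁ h₁ Y₂ h₂ heq
    rw [Finset.mem_coe, Finset.mem_powerset] at h₁ h₂
    have hl₁ : l ∉ Y₁ := fun h => hlT (h₁ h)
    have hl₂ : l ∉ Y₂ := fun h => hlT (h₂ h)
    have : (insert l Y₁).erase l = (insert l Y₂).erase l := by rw [heq]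
    rwa [Finset.erase_insert hl₁, Finset.erase_insert hl₂] at this

theorem stmt7 (l m n : ℕ) (hl : 0 < l) (hlm : l ≤ m) (hn : 0 < n) :
    ((((Finset.Icc l m).powerset.filter
        (fun X => l ∈ X ∧ Nat.gcd (X.gcd id) n = 1)).card : ℤ)) =
      ∑ d ∈ (Nat.gcd l n).divisors, (ArithmeticFunction.moebius d) * 2 ^ (m / d - l / d) := by
  classical
  set G := Nat.gcd l n with hG
  have hG0 : G ≠ 0 := Nat.gcd_ne_zero_left hl.ne'
  set S := (Finset.Icc l m).powerset.filter (fun X => l ∈ X) with hS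
  have hsplit : (Finset.Icc l m).powerset.filter
      (fun X => l ∈ X ∧ Nat.gcd (X.gcd id) n = 1)
      = S.filter (fun X => Nat.gcd (X.gcd id) n = 1) := by
    rw [hS, Finset.filter_filter]
  rw [hsplit]
  have hmoeb : ∀ k : ℕ, k ≠ 0 → (∑ d ∈ k.divisors, (ArithmeticFunction.moebius d : ℤ))
      = if k = 1 then 1 else 0 := by
    intro k hk
    have h := (ArithmeticFunction.coe_mul_zeta_apply
      (f := ArithmeticFunction.moebius) (x := k)).symm
    rwa [ArithmeticFunction.moebius_mul_coe_zeta, ArithmeticFunction.one_apply] at h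
  have step1 : ((S.filter (fun X => Nat.gcd (X.gcd id) n = 1)).card : ℤ)
      = ∑ X ∈ S, ∑ d ∈ (Nat.gcd (X.gcd id) n).divisors,
          (ArithmeticFunction.moebius d : ℤ) := by
    rw [Finset.card_filter]
    push_cast
    refine Finset.sum_congr rfl fun X hX => ?_
    rw [hmoeb _ (Nat.gcd_ne_zero_right hn.ne')]
  rw [step1]
  have step2 : ∀ X ∈ S, (∑ d ∈ (Nat.gcd (X.gcd id) n).divisors,
      (ArithmeticFunction.moebius d : ℤ))
      = ∑ d ∈ G.divisors, if d ∣ X.gcd id then (ArithmeticFunction.moebius d : ℤ) else 0 := by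
    intro X hX
    rw [hS, Finset.mem_filter, Finset.mem_powerset] at hX
    have hgl : X.gcd id ∣ l := Finset.gcd_dvd hX.2
    have hdvdG : Nat.gcd (X.gcd id) n ∣ G :=
      Nat.dvd_gcd ((Nat.gcd_dvd_left _ _).trans hgl) (Nat.gcd_dvd_right _ _)
    rw [← Nat.divisors_filter_dvd_of_dvd hG0 hdvdG, Finset.sum_filter]
    refine Finset.sum_congr rfl fun d hd => ?_
    have hdn : d ∣ n := (Nat.dvd_gcd_iff.mp (Nat.mem_divisors.mp hd).1).2
    congr 1
    simp only [Nat.dvd_gcd_iff, eq_iff_iff]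
    tauto
  rw [Finset.sum_congr rfl step2, Finset.sum_comm]
  refine Finset.sum_congr rfl fun d hd => ?_
  rw [Nat.mem_divisors] at hd
  have hdl : d ∣ l := (Nat.dvd_gcd_iff.mp hd.1).1
  have hd0 : 0 < d := Nat.pos_of_dvd_of_pos hdl hl
  rw [← Finset.sum_filter, Finset.sum_const, nsmul_eq_mul, mul_comm]
  congr 1
  have hc := count_subsets l m d hl hlm hdl hd0
  rw [hS, hc]
  push_cast
  ring
end

section
/- For positive integers l ≤ m, n, and k, the number of k-element subsets X of [l,m] containing l with gcd(X ∪ {n}) = 1 equals the sum over common divisors d of l and n of μ(d)·C(⌊m/d⌋ − l/d, k−1). -/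
open Finset

private lemma moebius_sum (g : ℕ) :
    ∑ d ∈ g.divisors, (ArithmeticFunction.moebius d : ℤ) = if g = 1 then 1 else 0 := by
  rw [← ArithmeticFunction.coe_mul_zeta_apply, ArithmeticFunction.moebius_mul_coe_zeta,
    ArithmeticFunction.one_apply]

private lemma Tcard (l m d : ℕ) (hl : 0 < l) (hlm : l ≤ m) (hd : 0 < d) (hdl : d ∣ l) :
    ((Finset.Ioc l m).filter (d ∣ ·)).card = m / d - l / d := by
  have hsplit : Finset.Ioc 0 m = Finset.Ioc 0 l ∪ Finset.Ioc l m :=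
    (Finset.Ioc_union_Ioc_eq_Ioc (Nat.zero_le l) hlm).symm
  have hdisj : Disjoint ((Finset.Ioc 0 l).filter (d ∣ ·)) ((Finset.Ioc l m).filter (d ∣ ·)) := by
    apply Finset.disjoint_filter_filter
    simp [Finset.disjoint_left]
    intro a _ ha hal
    omega
  have := Nat.Ioc_filter_dvd_card_eq_div m d
  have h2 := Nat.Ioc_filter_dvd_card_eq_div l d
  rw [hsplit, Finset.filter_union, Finset.card_union_of_disjoint hdisj, h2] at this
  omega

private lemma count_lemma (l m k d : ℕ) (hl : 0 < l) (hlm : l ≤ m) (hd : 0 < d)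
    (hdl : d ∣ l) (hk : 0 < k) :
    (((Finset.Icc l m).powerset.filter
        (fun X => l ∈ X ∧ X.card = k ∧ ∀ x ∈ X, d ∣ x)).card : ℤ)
      = Nat.choose (m / d - l / d) (k - 1) := by
  set T := (Finset.Ioc l m).filter (d ∣ ·) with hT
  rw [← Tcard l m d hl hlm hd hdl, ← hT, ← Finset.card_powersetCard]
  norm_cast
  apply Finset.card_bij (fun X _ => X.erase l)
  · intro X hX
    simp only [Finset.mem_filter, Finset.mem_powerset] at hX
    obtain ⟨hsub, hlX, hcard, hdvd⟩ := hX
    rw [Finset.mem_powersetCard]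
    constructor
    · intro x hx
      rw [Finset.mem_erase] at hx
      obtain ⟨hxl, hxX⟩ := hx
      have := hsub hxX
      rw [Finset.mem_Icc] at this
      rw [hT, Finset.mem_filter, Finset.mem_Ioc]
      exact ⟨⟨lt_of_le_of_ne this.1 (Ne.symm hxl), this.2⟩, hdvd x hxX⟩
    · rw [Finset.card_erase_of_mem hlX, hcard]
  · intro X hX Y hY h
    simp only [Finset.mem_filter, Finset.mem_powerset] at hX hY
    have : insert l (X.erase l) = insert l (Y.erase l) := by rw [h]
    rwa [Finset.insert_erase hX.2.1, Finset.insert_erase hY.2.1] at this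
  · intro Y hY
    rw [Finset.mem_powersetCard] at hY
    obtain ⟨hYsub, hYcard⟩ := hY
    have hlY : l ∉ Y := by
      intro h
      have := hYsub h
      rw [hT, Finset.mem_filter, Finset.mem_Ioc] at this
      omega
    refine ⟨insert l Y, ?_, ?_⟩
    · simp only [Finset.mem_filter, Finset.mem_powerset]
      refine ⟨?_, Finset.mem_insert_self l Y, ?_, ?_⟩
      · intro x hx
        rw [Finset.mem_insert] at hx
        rcases hx with rfl | hx
        · rw [Finset.mem_Icc]; omega
        · have := hYsub hx
          rw [hT, Finset.mem_filter, Finset.mem_Ioc] at this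
          rw [Finset.mem_Icc]; omega
      · rw [Finset.card_insert_of_notMem hlY, hYcard]; omega
      · intro x hx
        rw [Finset.mem_insert] at hx
        rcases hx with rfl | hx
        · exact hdl
        · have := hYsub hx
          rw [hT, Finset.mem_filter] at this
          exact this.2
    · rw [Finset.erase_insert hlY]

theorem stmt8 (l m n k : ℕ) (hl : 0 < l) (hlm : l ≤ m) (hn : 0 < n) (hk : 0 < k) :
    ((((Finset.Icc l m).powerset.filter
        (fun X => l ∈ X ∧ X.card = k ∧ Nat.gcd (X.gcd id) n = 1)).card : ℤ)) =
      ∑ d ∈ (Nat.gcd l n).divisors, (ArithmeticFunction.moebius d) *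
        (Nat.choose (m / d - l / d) (k - 1) : ℤ) := by
  classical
  set S := (Finset.Icc l m).powerset.filter (fun X => l ∈ X ∧ X.card = k) with hS
  set D := (Nat.gcd l n).divisors with hD
  have hgcd_pos : 0 < Nat.gcd l n := Nat.gcd_pos_of_pos_left n hl
  have hstep1 : ((Finset.Icc l m).powerset.filter
      (fun X => l ∈ X ∧ X.card = k ∧ Nat.gcd (X.gcd id) n = 1))
      = S.filter (fun X => Nat.gcd (X.gcd id) n = 1) := by
    rw [hS, Finset.filter_filter]
    apply Finset.filter_congr
    intro X _
    tauto
  rw [hstep1, Finset.card_filter]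
  push_cast
  have hinner : ∀ X ∈ S, (if Nat.gcd (X.gcd id) n = 1 then (1:ℤ) else 0)
      = ∑ d ∈ D, if d ∣ Nat.gcd (X.gcd id) n then (ArithmeticFunction.moebius d : ℤ) else 0 := by
    intro X hX
    rw [hS, Finset.mem_filter] at hX
    have hGl : Nat.gcd (X.gcd id) n ∣ Nat.gcd l n := by
      apply Nat.dvd_gcd
      · exact dvd_trans (Nat.gcd_dvd_left _ _) (Finset.gcd_dvd hX.2.1)
      · exact Nat.gcd_dvd_right _ _
    rw [← moebius_sum, ← Finset.sum_filter, hD,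
      Nat.divisors_filter_dvd_of_dvd hgcd_pos.ne' hGl]
  rw [Finset.sum_congr rfl hinner, Finset.sum_comm]
  apply Finset.sum_congr rfl
  intro d hd
  rw [hD, Nat.mem_divisors] at hd
  have hdpos : 0 < d := Nat.pos_of_dvd_of_pos hd.1 hgcd_pos
  have hdl : d ∣ l := hd.1.trans (Nat.gcd_dvd_left _ _)
  have hdn : d ∣ n := hd.1.trans (Nat.gcd_dvd_right _ _)
  rw [← Finset.sum_filter, Finset.sum_const, nsmul_eq_mul, mul_comm]
  congr 1
  rw [← count_lemma l m k d hl hlm hdpos hdl hk]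
  congr 1
  rw [hS, Finset.filter_filter]
  congr 1
  apply Finset.filter_congr
  intro X hX
  constructor
  · rintro ⟨⟨h1, h2⟩, h3⟩
    exact ⟨h1, h2, fun x hx => (Nat.dvd_gcd_iff.mp h3).1.trans (Finset.gcd_dvd hx)⟩
  · rintro ⟨h1, h2, h3⟩
    exact ⟨⟨h1, h2⟩, Nat.dvd_gcd (Finset.dvd_gcd h3) hdn⟩
end

section
/- For positive integers l1 ≤ m1 < l2 ≤ m2, n and k ≥ 2, the number of k-element subsets X of [l1,m1] ∪ [l2,m2] containing both l1 and l2 with gcd(X ∪ {n}) = 1 equals the sum over common divisors d of l1, l2 and n of μ(d)·C(⌊m1/d⌋ + ⌊m2/d⌋ − (l1+l2)/d, k−2). -/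
open Finset

private lemma moebius_sum_eq (m : ℕ) (hm : 0 < m) :
    ∑ d ∈ m.divisors, (ArithmeticFunction.moebius d : ℤ) = if m = 1 then 1 else 0 := by
  have h := congrArg (fun f => f m) ArithmeticFunction.moebius_mul_coe_zeta
  simp only [ArithmeticFunction.coe_mul_zeta_apply, ArithmeticFunction.one_apply] at h
  exact h

private lemma ioc_filter_card (c b d : ℕ) (hd : 0 < d) :
    ((Finset.Ioc c b).filter (d ∣ ·)).card = b / d - c / d := by
  have himg : (Finset.Ioc c b).filter (d ∣ ·) =
      (Finset.Ioc (c / d) (b / d)).image (fun j => d * j) := by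
    ext x
    simp only [mem_filter, mem_Ioc, mem_image]
    constructor
    · rintro ⟨⟨hc, hb⟩, j, rfl⟩
      refine ⟨j, ⟨?_, ?_⟩, rfl⟩
      · exact (Nat.div_lt_iff_lt_mul hd).2 (by rwa [mul_comm] at hc)
      · exact Nat.le_div_iff_mul_le hd |>.2 (by rwa [mul_comm] at hb)
    · rintro ⟨j, ⟨hc, hb⟩, rfl⟩
      refine ⟨⟨?_, ?_⟩, j, rfl⟩
      · have := (Nat.div_lt_iff_lt_mul hd).1 hc; rwa [mul_comm] at this
      · have := (Nat.le_div_iff_mul_le hd).1 hb; rwa [mul_comm] at this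
  rw [himg, Finset.card_image_of_injective _ (fun a b h => by
    exact Nat.eq_of_mul_eq_mul_left hd h), Nat.card_Ioc]

private lemma icc_filter_card (a b d : ℕ) (ha : 0 < a) (hd : 0 < d) (hda : d ∣ a)
    (hab : a ≤ b) :
    ((Finset.Icc a b).filter (d ∣ ·)).card = b / d - a / d + 1 := by
  have h1 : Finset.Icc a b = Finset.Ioc (a - 1) b := by
    ext x; simp only [mem_Icc, mem_Ioc]; omega
  have h2 : (a - 1) / d = a / d - 1 := by
    obtain ⟨q, rfl⟩ := hda
    have hq : 0 < q := Nat.pos_of_ne_zero (by rintro rfl; simp at ha)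
    have hq' : 0 < d * q := Nat.mul_pos hd hq
    have hdq : d ≤ d * q := Nat.le_mul_of_pos_right d hq
    rw [Nat.mul_div_cancel_left _ hd]
    apply Nat.div_eq_of_lt_le
    · have e1 : (q - 1) * d = d * q - d := by rw [Nat.sub_mul, one_mul, mul_comm]
      rw [e1]; omega
    · have e2 : (q - 1 + 1) * d = d * q := by
        rw [Nat.sub_add_cancel hq, mul_comm]
      rw [e2]; omega
  have h3 : 1 ≤ a / d := Nat.one_le_div_iff hd |>.2 (Nat.le_of_dvd ha hda)
  have h4 : a / d ≤ b / d := Nat.div_le_div_right hab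
  rw [h1, ioc_filter_card _ _ _ hd, h2]
  omega

private lemma count_aux (l1 m1 l2 m2 k d : ℕ) (hl1 : 0 < l1) (h1 : l1 ≤ m1) (h12 : m1 < l2)
    (h2 : l2 ≤ m2) (hk : 2 ≤ k) (hd : 0 < d) (hd1 : d ∣ l1) (hd2 : d ∣ l2) :
    (((Finset.Icc l1 m1 ∪ Finset.Icc l2 m2).powerset.filter
      (fun X => (l1 ∈ X ∧ l2 ∈ X ∧ X.card = k) ∧ ∀ x ∈ X, d ∣ x)).card)
      = Nat.choose (m1 / d + m2 / d - (l1 + l2) / d) (k - 2) := by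
  have hne : l1 ≠ l2 := by omega
  set S : Finset ℕ := Finset.Icc l1 m1 ∪ Finset.Icc l2 m2 with hS
  set T : Finset ℕ := (S.filter (d ∣ ·)) \ {l1, l2} with hT
  have hl1S : l1 ∈ S := by simp [hS, h1]
  have hl2S : l2 ∈ S := by simp [hS, h2]
  have hpair : ({l1, l2} : Finset ℕ) ⊆ S.filter (d ∣ ·) := by
    intro x hx
    simp only [mem_insert, mem_singleton] at hx
    rcases hx with rfl | rfl <;> simp [mem_filter, hl1S, hl2S, hd1, hd2]
  have hpaircard : ({l1, l2} : Finset ℕ).card = 2 := by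
    rw [Finset.card_insert_of_notMem (by simpa using hne), Finset.card_singleton]
  have hbij : (S.powerset.filter
      (fun X => (l1 ∈ X ∧ l2 ∈ X ∧ X.card = k) ∧ ∀ x ∈ X, d ∣ x)).card
      = (Finset.powersetCard (k - 2) T).card := by
    refine Finset.card_nbij' (fun X => X \ {l1, l2}) (fun Y => Y ∪ {l1, l2}) ?_ ?_ ?_ ?_
    · intro X hX
      simp only [mem_coe, mem_filter, mem_powerset] at hX
      obtain ⟨hXS, ⟨hXl1, hXl2, hXcard⟩, hXdvd⟩ := hX
      rw [Finset.mem_coe, Finset.mem_powersetCard]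
      constructor
      · intro x hx
        simp only [mem_sdiff] at hx
        simp only [hT, mem_sdiff, mem_filter]
        exact ⟨⟨hXS hx.1, hXdvd x hx.1⟩, hx.2⟩
      · have hsub : ({l1, l2} : Finset ℕ) ⊆ X := by
          intro x hx; simp only [mem_insert, mem_singleton] at hx
          rcases hx with rfl | rfl <;> assumption
        rw [Finset.card_sdiff_of_subset hsub, hpaircard, hXcard]
    · intro Y hY
      rw [Finset.mem_coe, Finset.mem_powersetCard] at hY
      obtain ⟨hYT, hYcard⟩ := hY
      have hYdis : Disjoint Y ({l1, l2} : Finset ℕ) := by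
        apply Finset.disjoint_left.2
        intro x hx hx2
        have := hYT hx
        simp only [hT, mem_sdiff] at this
        exact this.2 hx2
      simp only [mem_coe, mem_filter, mem_powerset]
      refine ⟨?_, ⟨?_, ?_, ?_⟩, ?_⟩
      · intro x hx
        rcases Finset.mem_union.1 hx with hx | hx
        · have := hYT hx
          simp only [hT, mem_sdiff, mem_filter] at this
          exact this.1.1
        · simp only [mem_insert, mem_singleton] at hx
          rcases hx with rfl | rfl <;> assumption
      · exact Finset.mem_union_right _ (by simp)
      · exact Finset.mem_union_right _ (by simp)
      · rw [Finset.card_union_of_disjoint hYdis, hYcard, hpaircard]; omega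
      · intro x hx
        rcases Finset.mem_union.1 hx with hx | hx
        · have := hYT hx
          simp only [hT, mem_sdiff, mem_filter] at this
          exact this.1.2
        · simp only [mem_insert, mem_singleton] at hx
          rcases hx with rfl | rfl
          · exact hd1
          · exact hd2
    · intro X hX
      simp only [mem_coe, mem_filter, mem_powerset] at hX
      obtain ⟨_, ⟨hXl1, hXl2, _⟩, _⟩ := hX
      have hsub : ({l1, l2} : Finset ℕ) ⊆ X := by
        intro x hx; simp only [mem_insert, mem_singleton] at hx
        rcases hx with rfl | rfl <;> assumption
      exact Finset.sdiff_union_of_subset hsub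
    · intro Y hY
      rw [Finset.mem_coe, Finset.mem_powersetCard] at hY
      have hYdis : Disjoint Y ({l1, l2} : Finset ℕ) := by
        apply Finset.disjoint_left.2
        intro x hx hx2
        have := hY.1 hx
        simp only [hT, mem_sdiff] at this
        exact this.2 hx2
      show (Y ∪ {l1, l2}) \ {l1, l2} = Y
      rw [Finset.union_sdiff_cancel_right hYdis]
  rw [hbij, Finset.card_powersetCard]
  congr 1
  have hdisj : Disjoint (Finset.Icc l1 m1) (Finset.Icc l2 m2) := by
    apply Finset.disjoint_left.2
    intro x hx hx2
    simp only [mem_Icc] at hx hx2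
    omega
  have hfilt : (S.filter (d ∣ ·)).card
      = (m1 / d - l1 / d + 1) + (m2 / d - l2 / d + 1) := by
    rw [hS, Finset.filter_union,
      Finset.card_union_of_disjoint (Finset.disjoint_filter_filter hdisj),
      icc_filter_card l1 m1 d hl1 hd hd1 h1,
      icc_filter_card l2 m2 d (by omega) hd hd2 h2]
  have hTcard : T.card = (S.filter (d ∣ ·)).card - 2 := by
    rw [hT, Finset.card_sdiff_of_subset hpair, hpaircard]
  have hq1 : 1 ≤ l1 / d := Nat.one_le_div_iff hd |>.2 (Nat.le_of_dvd hl1 hd1)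
  have hq2 : 1 ≤ l2 / d := Nat.one_le_div_iff hd |>.2 (Nat.le_of_dvd (by omega) hd2)
  have hq3 : l1 / d ≤ m1 / d := Nat.div_le_div_right h1
  have hq4 : l2 / d ≤ m2 / d := Nat.div_le_div_right h2
  have hadd : (l1 + l2) / d = l1 / d + l2 / d := Nat.add_div_of_dvd_right hd1
  rw [hTcard, hfilt, hadd]
  omega

theorem stmt10 (l1 m1 l2 m2 n k : ℕ) (hl1 : 0 < l1) (h1 : l1 ≤ m1) (h12 : m1 < l2)
    (h2 : l2 ≤ m2) (hn : 0 < n) (hk : 2 ≤ k) :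
    (((((Finset.Icc l1 m1) ∪ (Finset.Icc l2 m2)).powerset.filter
        (fun X => l1 ∈ X ∧ l2 ∈ X ∧ X.card = k ∧ Nat.gcd (X.gcd id) n = 1)).card : ℤ)) =
      ∑ d ∈ (Nat.gcd l1 (Nat.gcd l2 n)).divisors, (ArithmeticFunction.moebius d) *
        (Nat.choose (m1 / d + m2 / d - (l1 + l2) / d) (k - 2) : ℤ) := by
  set N := Nat.gcd l1 (Nat.gcd l2 n) with hN
  have hN0 : 0 < N := Nat.gcd_pos_of_pos_left _ hl1
  set S : Finset ℕ := Finset.Icc l1 m1 ∪ Finset.Icc l2 m2 with hS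
  set A : Finset (Finset ℕ) := S.powerset.filter (fun X => l1 ∈ X ∧ l2 ∈ X ∧ X.card = k)
    with hA
  have hsplit : S.powerset.filter
      (fun X => l1 ∈ X ∧ l2 ∈ X ∧ X.card = k ∧ Nat.gcd (X.gcd id) n = 1)
      = A.filter (fun X => Nat.gcd (X.gcd id) n = 1) := by
    rw [hA, Finset.filter_filter]
    apply Finset.filter_congr
    intro X _
    tauto
  rw [hsplit]
  rw [Finset.card_filter]
  push_cast
  have hstep1 : ∀ X ∈ A, ((if Nat.gcd (X.gcd id) n = 1 then 1 else 0) : ℤ)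
      = ∑ d ∈ N.divisors, (if d ∣ Nat.gcd (X.gcd id) n then
          (ArithmeticFunction.moebius d : ℤ) else 0) := by
    intro X hX
    simp only [hA, mem_filter, mem_powerset] at hX
    obtain ⟨hXS, hXl1, hXl2, hXcard⟩ := hX
    have hg0 : 0 < Nat.gcd (X.gcd id) n := Nat.gcd_pos_of_pos_right _ hn
    have hgN : Nat.gcd (X.gcd id) n ∣ N := by
      apply Nat.dvd_gcd
      · exact (Nat.gcd_dvd_left _ _).trans (Finset.gcd_dvd hXl1)
      · exact Nat.dvd_gcd ((Nat.gcd_dvd_left _ _).trans (Finset.gcd_dvd hXl2))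
          (Nat.gcd_dvd_right _ _)
    have e1 : ∑ d ∈ (Nat.gcd (X.gcd id) n).divisors, (ArithmeticFunction.moebius d : ℤ)
        = ∑ d ∈ (Nat.gcd (X.gcd id) n).divisors,
          (if d ∣ Nat.gcd (X.gcd id) n then (ArithmeticFunction.moebius d : ℤ) else 0) :=
      Finset.sum_congr rfl fun d hd => (if_pos (Nat.dvd_of_mem_divisors hd)).symm
    have e2 : ∑ d ∈ (Nat.gcd (X.gcd id) n).divisors,
          (if d ∣ Nat.gcd (X.gcd id) n then (ArithmeticFunction.moebius d : ℤ) else 0)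
        = ∑ d ∈ N.divisors,
          (if d ∣ Nat.gcd (X.gcd id) n then (ArithmeticFunction.moebius d : ℤ) else 0) := by
      apply Finset.sum_subset (Nat.divisors_subset_of_dvd (by omega) hgN)
      intro d hd hd2
      rw [if_neg]
      intro hdvd
      exact hd2 (Nat.mem_divisors.2 ⟨hdvd, by omega⟩)
    rw [← moebius_sum_eq _ hg0, e1, e2]
  rw [Finset.sum_congr rfl hstep1, Finset.sum_comm]
  apply Finset.sum_congr rfl
  intro d hd
  have hdN : d ∣ N := Nat.dvd_of_mem_divisors hd
  have hd0 : 0 < d := Nat.pos_of_mem_divisors hd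
  have hdl1 : d ∣ l1 := hdN.trans (Nat.gcd_dvd_left _ _)
  have hdl2 : d ∣ l2 := hdN.trans ((Nat.gcd_dvd_right _ _).trans (Nat.gcd_dvd_left _ _))
  have hdn : d ∣ n := hdN.trans ((Nat.gcd_dvd_right _ _).trans (Nat.gcd_dvd_right _ _))
  have hcond : ∀ X ∈ A, (d ∣ Nat.gcd (X.gcd id) n ↔ ∀ x ∈ X, d ∣ x) := by
    intro X _
    constructor
    · intro h x hx
      have := (Nat.dvd_gcd_iff.1 h).1
      exact Finset.dvd_gcd_iff.1 this x hx
    · intro h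
      exact Nat.dvd_gcd (Finset.dvd_gcd_iff.2 fun b hb => h b hb) hdn
  have hh : ∑ X ∈ A, (if d ∣ Nat.gcd (X.gcd id) n then (ArithmeticFunction.moebius d : ℤ)
      else 0) = ∑ X ∈ A, (if ∀ x ∈ X, d ∣ x then (ArithmeticFunction.moebius d : ℤ)
      else 0) := by
    apply Finset.sum_congr rfl
    intro X hX
    rw [if_congr (hcond X hX) rfl rfl]
  rw [hh]
  have hcount : (A.filter (fun X => ∀ x ∈ X, d ∣ x)).card
      = Nat.choose (m1 / d + m2 / d - (l1 + l2) / d) (k - 2) := by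
    rw [hA, Finset.filter_filter]
    exact count_aux l1 m1 l2 m2 k d hl1 h1 h12 h2 hk hd0 hdl1 hdl2
  rw [← Finset.sum_filter, Finset.sum_const, nsmul_eq_mul, hcount, mul_comm]
end

section
/- For positive integers l1 ≤ m1 < l2 ≤ m2 and n > 1, the number of nonempty subsets X of [l1,m1] ∪ [l2,m2] with gcd(X ∪ {n}) = 1 equals the sum over divisors d of n of μ(d)·2^(⌊m1/d⌋ + ⌊m2/d⌋ − ⌊(l1−1)/d⌋ − ⌊(l2−1)/d⌋). -/
open Finset

lemma aux_musum (m : ℕ) : ∑ d ∈ m.divisors, (ArithmeticFunction.moebius d : ℤ)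
    = if m = 1 then 1 else 0 := by
  have := congrArg (fun f : ArithmeticFunction ℤ => f m)
    ArithmeticFunction.moebius_mul_coe_zeta
  simp only [ArithmeticFunction.coe_mul_zeta_apply, ArithmeticFunction.one_apply] at this
  exact this

lemma aux_count (l m d : ℕ) (hl : 0 < l) (h : l ≤ m) :
    ((Finset.Icc l m).filter (fun x => d ∣ x)).card = m / d - (l - 1) / d := by
  have h1 : (Finset.Icc l m).filter (fun x => d ∣ x)
      = (Finset.Ioc 0 m).filter (fun x => d ∣ x)
        \ (Finset.Ioc 0 (l - 1)).filter (fun x => d ∣ x) := by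
    ext x
    simp only [Finset.mem_filter, Finset.mem_Icc, Finset.mem_Ioc, Finset.mem_sdiff]
    constructor
    · rintro ⟨⟨a, b⟩, c⟩; exact ⟨⟨⟨by omega, b⟩, c⟩, by rintro ⟨⟨_, _⟩, _⟩; omega⟩
    · rintro ⟨⟨⟨a, b⟩, c⟩, e⟩
      refine ⟨⟨?_, b⟩, c⟩
      by_contra hx
      exact e ⟨⟨a, by omega⟩, c⟩
  rw [h1, Finset.card_sdiff_of_subset]
  · rw [Nat.Ioc_filter_dvd_card_eq_div, Nat.Ioc_filter_dvd_card_eq_div]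
  · apply Finset.filter_subset_filter
    apply Finset.Ioc_subset_Ioc_right; omega

theorem stmt13 (l1 m1 l2 m2 n : ℕ) (hl1 : 0 < l1) (h1 : l1 ≤ m1) (h12 : m1 < l2)
    (h2 : l2 ≤ m2) (hn : 1 < n) :
    (((((Finset.Icc l1 m1) ∪ (Finset.Icc l2 m2)).powerset.filter
        (fun X => X.Nonempty ∧ Nat.gcd (X.gcd id) n = 1)).card : ℤ)) =
      ∑ d ∈ n.divisors, (ArithmeticFunction.moebius d) *
        2 ^ (m1 / d + m2 / d - (l1 - 1) / d - (l2 - 1) / d) := by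
  classical
  have hn0 : n ≠ 0 := by omega
  set S := (Finset.Icc l1 m1) ∪ (Finset.Icc l2 m2) with hS
  -- inner Möbius identity
  have inner : ∀ X : Finset ℕ,
      (∑ d ∈ n.divisors.filter (fun d => d ∣ X.gcd id), (ArithmeticFunction.moebius d : ℤ))
        = if Nat.gcd (X.gcd id) n = 1 then 1 else 0 := by
    intro X
    have hset : n.divisors.filter (fun d => d ∣ X.gcd id)
        = (Nat.gcd (X.gcd id) n).divisors := by
      ext d
      simp only [Finset.mem_filter, Nat.mem_divisors, Nat.dvd_gcd_iff]
      constructor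
      · rintro ⟨⟨a, _⟩, b⟩
        exact ⟨⟨b, a⟩, fun h => hn0 (Nat.eq_zero_of_gcd_eq_zero_right h)⟩
      · rintro ⟨⟨a, b⟩, _⟩
        exact ⟨⟨b, hn0⟩, a⟩
    rw [hset, aux_musum]
  -- rewrite card as double sum
  have stepA : ((S.powerset.filter
      (fun X => X.Nonempty ∧ Nat.gcd (X.gcd id) n = 1)).card : ℤ)
      = ∑ X ∈ S.powerset.filter (fun X => X.Nonempty),
          ∑ d ∈ n.divisors, (if d ∣ X.gcd id then (ArithmeticFunction.moebius d : ℤ) else 0) := by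
    have h0 : S.powerset.filter (fun X => X.Nonempty ∧ Nat.gcd (X.gcd id) n = 1)
        = (S.powerset.filter (fun X => X.Nonempty)).filter
            (fun X => Nat.gcd (X.gcd id) n = 1) := by
      rw [Finset.filter_filter]
    rw [h0, Finset.card_filter]
    push_cast
    refine Finset.sum_congr rfl fun X _ => ?_
    rw [← Finset.sum_filter, inner X]
  rw [stepA, Finset.sum_comm]
  have stepB : ∀ d ∈ n.divisors,
      (∑ X ∈ S.powerset.filter (fun X => X.Nonempty),
        (if d ∣ X.gcd id then (ArithmeticFunction.moebius d : ℤ) else 0))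
      = (ArithmeticFunction.moebius d : ℤ) *
          (2 ^ (m1 / d + m2 / d - (l1 - 1) / d - (l2 - 1) / d) - 1) := by
    intro d hd
    have hd0 : 0 < d := Nat.pos_of_mem_divisors hd
    rw [← Finset.sum_filter, Finset.sum_const, Finset.filter_filter]
    have hsetT : S.powerset.filter (fun X => X.Nonempty ∧ d ∣ X.gcd id)
        = ((S.filter (fun x => d ∣ x)).powerset).filter (fun X => X.Nonempty) := by
      ext X
      simp only [Finset.mem_filter, Finset.mem_powerset, Finset.dvd_gcd_iff, id_eq,
        Finset.subset_iff, Finset.mem_filter]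
      constructor
      · rintro ⟨hsub, hne, hdvd⟩
        exact ⟨fun x hx => ⟨hsub hx, hdvd x hx⟩, hne⟩
      · rintro ⟨hsub, hne⟩
        exact ⟨fun x hx => (hsub hx).1, hne, fun x hx => (hsub hx).2⟩
    rw [hsetT]
    have hcard : (((S.filter (fun x => d ∣ x)).powerset).filter
        (fun X => X.Nonempty)).card
        = 2 ^ ((S.filter (fun x => d ∣ x)).card) - 1 := by
      have : ((S.filter (fun x => d ∣ x)).powerset).filter (fun X => X.Nonempty)
          = ((S.filter (fun x => d ∣ x)).powerset).erase ∅ := by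
        ext X
        simp [Finset.nonempty_iff_ne_empty, and_comm]
      rw [this, Finset.card_erase_of_mem (Finset.empty_mem_powerset _),
        Finset.card_powerset]
    rw [hcard]
    -- compute the count
    have hk : (S.filter (fun x => d ∣ x)).card
        = m1 / d + m2 / d - (l1 - 1) / d - (l2 - 1) / d := by
      rw [hS, Finset.filter_union, Finset.card_union_of_disjoint]
      · rw [aux_count l1 m1 d hl1 h1, aux_count l2 m2 d (by omega) h2]
        have e1 : (l1 - 1) / d ≤ m1 / d := Nat.div_le_div_right (by omega)
        have e2 : (l2 - 1) / d ≤ m2 / d := Nat.div_le_div_right (by omega)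
        omega
      · apply Finset.disjoint_filter_filter
        rw [Finset.disjoint_left]
        intro x hx hx2
        simp only [Finset.mem_Icc] at hx hx2
        omega
    rw [hk]
    have hle : 1 ≤ 2 ^ (m1 / d + m2 / d - (l1 - 1) / d - (l2 - 1) / d) :=
      Nat.one_le_two_pow
    rw [nsmul_eq_mul, Nat.cast_sub hle]
    push_cast
    ring
  rw [Finset.sum_congr rfl stepB]
  have split : ∑ d ∈ n.divisors, (ArithmeticFunction.moebius d : ℤ) *
      (2 ^ (m1 / d + m2 / d - (l1 - 1) / d - (l2 - 1) / d) - 1)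
      = (∑ d ∈ n.divisors, (ArithmeticFunction.moebius d : ℤ) *
          2 ^ (m1 / d + m2 / d - (l1 - 1) / d - (l2 - 1) / d))
        - ∑ d ∈ n.divisors, (ArithmeticFunction.moebius d : ℤ) := by
    rw [← Finset.sum_sub_distrib]
    refine Finset.sum_congr rfl fun d _ => ?_
    ring
  rw [split, aux_musum, if_neg (by omega)]
  ring
end
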